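/- Let n be a positive integer, φ ≥ 1 and ε > 0 reals. Let E be a finite index set and let (X_e)_{e∈E} be independent real-valued random variables, each having a probability density function bounded above by φ. Let 𝒞 be a finite family of at most (n+1)! 'cycles', where each C ∈ 𝒞 is a nonempty subset of E of cardinality |C| ≤ n together with signs σ^C_e ∈ {−1,+1} for e ∈ C, and define μ(C) = (∑_{e∈C} σ^C_e X_e)/|C|. Then the probability that there exists C ∈ 𝒞 with μ(C) ∈ [−ε, 0) is at most (n+1)!·n·ε·φ. -/

import Mathlib

open MeasureTheory ProbabilityTheory
open scoped ENNReal NNReal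

private lemma iIndepFun_congr' {Ω ι : Type*} [MeasurableSpace Ω] {μ : Measure Ω}
    {f g : ι → Ω → ℝ} (h : ∀ i, f i =ᵐ[μ] g i)
    (hf : iIndepFun f μ) :
    iIndepFun g μ := by
  rw [iIndepFun_iff_measure_inter_preimage_eq_mul] at hf ⊢
  intro S sets hsets
  have h1 : ∀ i ∈ S, ∀ᵐ ω ∂μ, (g i ω ∈ sets i ↔ f i ω ∈ sets i) := by
    intro i _
    filter_upwards [h i] with ω hω
    rw [hω]
  have h1' : ∀ i ∈ S, (g i ⁻¹' sets i : Set Ω) =ᵐ[μ] (f i ⁻¹' sets i) := fun i hi =>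
    Filter.eventuallyEq_set.mpr (h1 i hi)
  have h2 : (⋂ i ∈ S, g i ⁻¹' sets i : Set Ω) =ᵐ[μ] (⋂ i ∈ S, f i ⁻¹' sets i) := by
    rw [Filter.eventuallyEq_set]
    filter_upwards [(ae_ball_iff S.countable_toSet).mpr h1] with ω hω
    simp only [Set.mem_iInter, Set.mem_preimage]
    exact ⟨fun h' i hi => (hω i hi).mp (h' i hi), fun h' i hi => (hω i hi).mpr (h' i hi)⟩
  rw [measure_congr h2, hf S hsets]
  exact (Finset.prod_congr rfl fun i hi => (measure_congr (h1' i hi)).symm)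

private lemma map_le_of_pdf_le {Ω : Type*} [MeasureSpace Ω] (X : Ω → ℝ) [HasPDF X ℙ volume]
    {φ : ℝ} (hb : ∀ᵐ x ∂(volume : Measure ℝ), pdf X ℙ volume x ≤ ENNReal.ofReal φ)
    {s : Set ℝ} (hs : MeasurableSet s) :
    Measure.map X ℙ s ≤ ENNReal.ofReal φ * volume s := by
  rw [map_eq_setLIntegral_pdf X ℙ volume hs]
  calc ∫⁻ x in s, pdf X ℙ volume x ≤ ∫⁻ _ in s, ENNReal.ofReal φ :=
        lintegral_mono_ae (ae_restrict_of_ae hb)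
    _ = ENNReal.ofReal φ * volume s := by rw [setLIntegral_const]

private lemma key_add_bound {Ω : Type*} [MeasureSpace Ω] [IsProbabilityMeasure (ℙ : Measure Ω)]
    (Y T : Ω → ℝ) (hY : AEMeasurable Y ℙ) (hT : AEMeasurable T ℙ)
    (hind : IndepFun Y T ℙ) (φ : ℝ)
    (hlaw : ∀ a b : ℝ, Measure.map Y ℙ (Set.Ico a b) ≤
      ENNReal.ofReal φ * ENNReal.ofReal (b - a)) (a b : ℝ) :
    ℙ {ω | Y ω + T ω ∈ Set.Ico a b} ≤ ENNReal.ofReal φ * ENNReal.ofReal (b - a) := by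
  have hmap : Measure.map (fun ω => (T ω, Y ω)) ℙ = (Measure.map T ℙ).prod (Measure.map Y ℙ) :=
    (indepFun_iff_map_prod_eq_prod_map_map hT hY).mp hind.symm
  set s : Set (ℝ × ℝ) := {p | p.2 + p.1 ∈ Set.Ico a b} with hs_def
  have hs : MeasurableSet s := (measurable_snd.add measurable_fst) measurableSet_Ico
  have hpre : (fun ω => (T ω, Y ω)) ⁻¹' s = {ω | Y ω + T ω ∈ Set.Ico a b} := rfl
  rw [← hpre, ← Measure.map_apply_of_aemeasurable (hT.prodMk hY) hs, hmap,
    Measure.prod_apply hs]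
  have hslice : ∀ t : ℝ, (Prod.mk t ⁻¹' s : Set ℝ) = Set.Ico (a - t) (b - t) := by
    intro t
    ext y
    simp only [hs_def, Set.mem_preimage, Set.mem_setOf_eq, Set.mem_Ico]
    constructor <;> rintro ⟨h1, h2⟩ <;> constructor <;> linarith
  calc ∫⁻ t, (Measure.map Y ℙ) (Prod.mk t ⁻¹' s) ∂(Measure.map T ℙ)
      ≤ ∫⁻ _, ENNReal.ofReal φ * ENNReal.ofReal (b - a) ∂(Measure.map T ℙ) := by
        refine lintegral_mono fun t => ?_
        rw [hslice t]
        calc (Measure.map Y ℙ) (Set.Ico (a - t) (b - t))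
            ≤ ENNReal.ofReal φ * ENNReal.ofReal ((b - t) - (a - t)) := hlaw _ _
          _ = ENNReal.ofReal φ * ENNReal.ofReal (b - a) := by congr 2; ring
    _ = ENNReal.ofReal φ * ENNReal.ofReal (b - a) := by
        have : IsProbabilityMeasure (Measure.map T ℙ) := Measure.isProbabilityMeasure_map hT
        simp

/-- Corollary 3: union bound. With independent edge costs `X e`, each with density bounded
by `φ`, and a family of at most `(n+1)!` signed "cycles", each a nonempty subset of edges of
cardinality at most `n`, the probability that some cycle has mean cost in `[−ε, 0)` is at
most `(n+1)!·n·ε·φ`. -/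
theorem stmt2 {Ω : Type*} [MeasureSpace Ω] [IsProbabilityMeasure (ℙ : Measure Ω)]
    (n : ℕ) (hn : 0 < n) (φ ε : ℝ) (hφ : 1 ≤ φ) (hε : 0 < ε)
    {E : Type*} [Fintype E]
    (X : E → Ω → ℝ)
    (hindep : iIndepFun X ℙ)
    (hpdf : ∀ e, HasPDF (X e) ℙ volume)
    (hbound : ∀ e, ∀ᵐ x ∂(volume : Measure ℝ), pdf (X e) ℙ volume x ≤ ENNReal.ofReal φ)
    {I : Type*} [Fintype I] (hI : Fintype.card I ≤ Nat.factorial (n + 1))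
    (C : I → Finset E) (hCne : ∀ j, (C j).Nonempty) (hCn : ∀ j, (C j).card ≤ n)
    (σ : I → E → ℝ) (hσ : ∀ j, ∀ e ∈ C j, σ j e = 1 ∨ σ j e = -1) :
    (ℙ {ω | ∃ j, (∑ e ∈ C j, σ j e * X e ω) / ((C j).card : ℝ) ∈ Set.Ico (-ε) 0}).toReal
      ≤ Nat.factorial (n + 1) * n * ε * φ := by
  classical
  have hφ0 : 0 ≤ φ := le_trans zero_le_one hφ
  have hXae : ∀ e, AEMeasurable (X e) ℙ := fun e => (hpdf e).aemeasurable'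
  set X' : E → Ω → ℝ := fun e => (hXae e).mk (X e) with hX'def
  have hmeas' : ∀ e, Measurable (X' e) := fun e => (hXae e).measurable_mk
  have heq : ∀ e, X e =ᵐ[ℙ] X' e := fun e => (hXae e).ae_eq_mk
  have hmapeq : ∀ e, Measure.map (X e) ℙ = Measure.map (X' e) ℙ := fun e =>
    Measure.map_congr (heq e)
  have hindep' : iIndepFun X' ℙ :=
    iIndepFun_congr' heq hindep
  -- single cycle law bound for σ j e * X' e
  have hlaw : ∀ j, ∀ e ∈ C j, ∀ a b : ℝ,
      Measure.map (fun ω => σ j e * X' e ω) ℙ (Set.Ico a b) ≤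
        ENNReal.ofReal φ * ENNReal.ofReal (b - a) := by
    intro j e he a b
    have hmb : Measurable (fun x : ℝ => σ j e * x) := measurable_const_mul _
    have h1 : Measure.map (fun ω => σ j e * X' e ω) ℙ (Set.Ico a b)
        = Measure.map (X' e) ℙ ((fun x : ℝ => σ j e * x) ⁻¹' Set.Ico a b) := by
      have hf1 : Measurable (fun ω => σ j e * X' e ω) := (hmeas' e).const_mul _
      rw [Measure.map_apply hf1 measurableSet_Ico,
        Measure.map_apply (hmeas' e) (hmb measurableSet_Ico)]
      rfl
    rw [h1, ← hmapeq e]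
    rcases hσ j e he with hs1 | hs1
    · have : (fun x : ℝ => σ j e * x) ⁻¹' Set.Ico a b = Set.Ico a b := by
        simp [hs1]
      rw [this]
      have := map_le_of_pdf_le (X e) (hbound e) (measurableSet_Ico (a := a) (b := b))
      simpa [Real.volume_Ico] using this
    · have : (fun x : ℝ => σ j e * x) ⁻¹' Set.Ico a b = Set.Ioc (-b) (-a) := by
        ext x
        simp only [hs1, Set.mem_preimage, Set.mem_Ico, Set.mem_Ioc]
        constructor <;> rintro ⟨h1, h2⟩ <;> constructor <;> linarith
      rw [this]
      have := map_le_of_pdf_le (X e) (hbound e) (measurableSet_Ioc (a := -b) (b := -a))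
      have hv : (volume : Measure ℝ) (Set.Ioc (-b) (-a)) = ENNReal.ofReal (b - a) := by
        rw [Real.volume_Ioc]; congr 1; ring
      rw [hv] at this
      exact this
  -- the per-cycle probability bound
  have hper : ∀ j, ℙ {ω | (∑ e ∈ C j, σ j e * X' e ω) / ((C j).card : ℝ) ∈ Set.Ico (-ε) 0}
      ≤ ENNReal.ofReal (n * ε * φ) := by
    intro j
    obtain ⟨e0, he0⟩ := hCne j
    have hc0 : (0 : ℝ) < ((C j).card : ℝ) := by
      exact_mod_cast Finset.card_pos.mpr (hCne j)
    set c : ℝ := ((C j).card : ℝ) with hc_def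
    set Y : E → Ω → ℝ := fun e ω => σ j e * X' e ω with hY_def
    have hYmeas : ∀ e, Measurable (Y e) := fun e => (hmeas' e).const_mul _
    have hYindep : iIndepFun Y ℙ := by
      have := hindep'.comp (fun e (x : ℝ) => σ j e * x) (fun e => measurable_const_mul _)
      exact this
    have hind : IndepFun (∑ e ∈ (C j).erase e0, Y e) (Y e0) ℙ :=
      hYindep.indepFun_finsetSum_of_notMem hYmeas (Finset.notMem_erase e0 _)
    set T : Ω → ℝ := ∑ e ∈ (C j).erase e0, Y e with hT_def
    have hset : {ω | (∑ e ∈ C j, σ j e * X' e ω) / c ∈ Set.Ico (-ε) 0}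
        = {ω | Y e0 ω + T ω ∈ Set.Ico (-(ε * c)) 0} := by
      ext ω
      have hsum : (∑ e ∈ C j, σ j e * X' e ω) = Y e0 ω + T ω := by
        have hTw : T ω = ∑ e ∈ (C j).erase e0, σ j e * X' e ω := by
          rw [hT_def, Finset.sum_apply]
        rw [hTw, hY_def]
        exact (Finset.add_sum_erase (C j) (fun e => σ j e * X' e ω) he0).symm
      simp only [Set.mem_setOf_eq, Set.mem_Ico, hsum]
      rw [le_div_iff₀ hc0, div_lt_iff₀ hc0]
      constructor <;> rintro ⟨h1, h2⟩ <;> constructor <;> nlinarith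
    rw [hset]
    have hTmeas : Measurable T := by
      rw [hT_def, Finset.sum_fn]
      exact Finset.measurable_sum _ (fun e _ => hYmeas e)
    have hkey := key_add_bound (Y e0) T (hYmeas e0).aemeasurable hTmeas.aemeasurable
      hind.symm φ (hlaw j e0 he0) (-(ε * c)) 0
    refine le_trans hkey ?_
    rw [← ENNReal.ofReal_mul hφ0]
    refine ENNReal.ofReal_le_ofReal ?_
    have hcn : c ≤ (n : ℝ) := by rw [hc_def]; exact_mod_cast hCn j
    nlinarith [mul_nonneg (mul_nonneg hε.le hφ0) (sub_nonneg.mpr hcn)]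
  -- union bound
  have hevent : ℙ {ω | ∃ j, (∑ e ∈ C j, σ j e * X e ω) / ((C j).card : ℝ) ∈ Set.Ico (-ε) 0}
      = ℙ {ω | ∃ j, (∑ e ∈ C j, σ j e * X' e ω) / ((C j).card : ℝ) ∈ Set.Ico (-ε) 0} := by
    refine measure_congr ?_
    rw [Filter.eventuallyEq_set]
    have hae : ∀ᵐ ω ∂(ℙ : Measure Ω), ∀ e, X e ω = X' e ω := ae_all_iff.mpr heq
    filter_upwards [hae] with ω hω
    have : ∀ j, (∑ e ∈ C j, σ j e * X e ω) = ∑ e ∈ C j, σ j e * X' e ω := fun j =>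
      Finset.sum_congr rfl fun e _ => by rw [hω e]
    simp only [Set.mem_setOf_eq, this]
  rw [hevent]
  have hunion : {ω | ∃ j, (∑ e ∈ C j, σ j e * X' e ω) / ((C j).card : ℝ) ∈ Set.Ico (-ε) 0}
      = ⋃ j, {ω | (∑ e ∈ C j, σ j e * X' e ω) / ((C j).card : ℝ) ∈ Set.Ico (-ε) 0} := by
    ext ω; simp
  rw [hunion]
  have hbnd : ℙ (⋃ j, {ω | (∑ e ∈ C j, σ j e * X' e ω) / ((C j).card : ℝ) ∈ Set.Ico (-ε) 0})
      ≤ ENNReal.ofReal (Nat.factorial (n + 1) * n * ε * φ) := by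
    calc ℙ (⋃ j, _) ≤ ∑ j, ℙ {ω | (∑ e ∈ C j, σ j e * X' e ω) / ((C j).card : ℝ)
          ∈ Set.Ico (-ε) 0} := measure_iUnion_fintype_le _ _
      _ ≤ ∑ _j : I, ENNReal.ofReal (n * ε * φ) := Finset.sum_le_sum fun j _ => hper j
      _ = (Fintype.card I : ℝ≥0∞) * ENNReal.ofReal (n * ε * φ) := by
          rw [Finset.sum_const, nsmul_eq_mul]; rfl
      _ ≤ (Nat.factorial (n + 1) : ℝ≥0∞) * ENNReal.ofReal (n * ε * φ) := by
          gcongr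
      _ = ENNReal.ofReal (Nat.factorial (n + 1) * n * ε * φ) := by
          rw [← ENNReal.ofReal_natCast, ← ENNReal.ofReal_mul (by positivity)]
          congr 1
          ring
  refine ENNReal.toReal_le_of_le_ofReal (by positivity) hbnd
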